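/- If a nontrivial group G admits a locally invariant total ordering, then G admits uncountably many locally invariant total orderings. -/

import Mathlib

namespace Stmt15Aux

variable {G : Type*} [Group G]
open scoped Classical
open Filter
set_option linter.unusedSectionVars false


/-- asymmetry from irreflexivity + transitivity -/
lemma asym (r : G → G → Prop) (hi : ∀ g : G, ¬ r g g)
    (ht : ∀ a b c : G, r a b → r b c → r a c) {a b : G} (hab : r a b) : ¬ r b a :=
  fun hba => hi a (ht a b a hab hba)

/-- every nonempty finite set has a maximum w.r.t. a total strict order -/
lemma exists_max (r : G → G → Prop)
    (ht : ∀ a b c : G, r a b → r b c → r a c)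
    (hto : ∀ a b : G, a ≠ b → r a b ∨ r b a) :
    ∀ S : Finset G, S.Nonempty → ∃ m ∈ S, ∀ a ∈ S, a ≠ m → r a m := by
  intro S
  induction S using Finset.induction_on with
  | empty => intro h; exact absurd h (by simp)
  | @insert x T hx ih =>
    intro _
    rcases T.eq_empty_or_nonempty with hT | hT
    · subst hT
      exact ⟨x, by simp, by simp⟩
    · obtain ⟨m, hm, hmax⟩ := ih hT
      by_cases hxm : x = m
      · subst hxm
        exact ⟨x, by simp, by
          intro a ha hax
          rcases Finset.mem_insert.mp ha with h1 | h1
          · exact absurd h1 hax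
          · exact hmax a h1 hax⟩
      · rcases hto x m hxm with h1 | h1
        · refine ⟨m, Finset.mem_insert_of_mem hm, ?_⟩
          intro a ha ham
          rcases Finset.mem_insert.mp ha with h2 | h2
          · subst h2; exact h1
          · exact hmax a h2 ham
        · refine ⟨x, Finset.mem_insert_self x T, ?_⟩
          intro a ha hax
          rcases Finset.mem_insert.mp ha with h2 | h2
          · exact absurd h2 hax
          · by_cases ham : a = m
            · subst ham; exact h1
            · exact ht a m x (hmax a h2 ham) h1

/-- a locally invariant order has no torsion: `g ^ n = 1 → g = 1` -/
lemma pow_ne (r : G → G → Prop) (hi : ∀ g : G, ¬ r g g)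
    (ht : ∀ a b c : G, r a b → r b c → r a c)
    (hto : ∀ a b : G, a ≠ b → r a b ∨ r b a)
    (hl : ∀ g h : G, h ≠ 1 → r g (h * g) ∨ r g (h⁻¹ * g))
    {g : G} (hg : g ≠ 1) {n : ℕ} (hn : n ≠ 0) : g ^ n ≠ 1 := by
  intro hpow
  set T : Finset G := (Finset.range n).image (g ^ ·) with hT
  have hTne : T.Nonempty := ⟨g ^ 0, Finset.mem_image.mpr ⟨0, by
    exact Finset.mem_range.mpr (Nat.pos_of_ne_zero hn), rfl⟩⟩
  obtain ⟨m, hm, hmax⟩ := exists_max r ht hto T hTne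
  obtain ⟨i, hi', hmi⟩ := Finset.mem_image.mp hm
  have hilt : i < n := Finset.mem_range.mp hi'
  -- g * m ∈ T
  have h1 : g * m ∈ T := by
    subst hmi
    rcases Nat.lt_or_ge (i+1) n with hc | hc
    · exact Finset.mem_image.mpr ⟨i+1, Finset.mem_range.mpr hc, by rw [pow_succ']⟩
    · have : i + 1 = n := le_antisymm hilt hc
      refine Finset.mem_image.mpr ⟨0, Finset.mem_range.mpr (Nat.pos_of_ne_zero hn), ?_⟩
      rw [pow_zero, ← hpow, ← this, pow_succ']
  have h2 : g⁻¹ * m ∈ T := by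
    subst hmi
    rcases Nat.eq_zero_or_pos i with hc | hc
    · subst hc
      refine Finset.mem_image.mpr ⟨n - 1, Finset.mem_range.mpr (by omega), ?_⟩
      have : g * g ^ (n-1) = 1 := by
        rw [← pow_succ']
        have : n - 1 + 1 = n := by omega
        rw [this, hpow]
      rw [pow_zero, mul_one]
      exact eq_inv_of_mul_eq_one_right this
    · refine Finset.mem_image.mpr ⟨i - 1, Finset.mem_range.mpr (by omega), ?_⟩
      have : g * g ^ (i-1) = g ^ i := by
        rw [← pow_succ']
        congr 1
        omega
      rw [← this, ← mul_assoc, inv_mul_cancel, one_mul]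
  have hne1 : g * m ≠ m := by
    intro hcon
    exact hg (mul_right_cancel (by rw [one_mul]; exact hcon))
  have hne2 : g⁻¹ * m ≠ m := by
    intro hcon
    apply hg
    have : g⁻¹ = 1 := mul_right_cancel (by rw [one_mul]; exact hcon)
    simpa using congrArg (·⁻¹) this
  rcases hl m g hg with hc | hc
  · exact asym r hi ht hc (hmax _ h1 hne1)
  · exact asym r hi ht hc (hmax _ h2 hne2)

lemma sq_ne (r : G → G → Prop) (hi : ∀ g : G, ¬ r g g)
    (ht : ∀ a b c : G, r a b → r b c → r a c)
    (hto : ∀ a b : G, a ≠ b → r a b ∨ r b a)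
    (hl : ∀ g h : G, h ≠ 1 → r g (h * g) ∨ r g (h⁻¹ * g))
    {g : G} (hg : g ≠ 1) : g⁻¹ ≠ g := by
  intro hcon
  have : g ^ 2 = 1 := by
    rw [pow_two]
    nth_rewrite 1 [← hcon]
    exact inv_mul_cancel g
  exact pow_ne r hi ht hto hl hg (by norm_num) this




lemma mul_ne_self {h m : G} (hh : h ≠ 1) : h * m ≠ m :=
  fun e => hh (mul_right_cancel (by rw [one_mul]; exact e))

/-- the maximum of a finite set w.r.t. a locally invariant order is not a midpoint -/
lemma max_nonmid (r : G → G → Prop) (hi : ∀ g : G, ¬ r g g)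
    (ht : ∀ a b c : G, r a b → r b c → r a c)
    (hl : ∀ g h : G, h ≠ 1 → r g (h * g) ∨ r g (h⁻¹ * g))
    {S : Finset G} {m : G} (hmax : ∀ a ∈ S, a ≠ m → r a m)
    {h : G} (hh : h ≠ 1) (h1 : h * m ∈ S) (h2 : h⁻¹ * m ∈ S) : False := by
  rcases hl m h hh with hc | hc
  · exact asym r hi ht hc (hmax _ h1 (mul_ne_self hh))
  · exact asym r hi ht hc (hmax _ h2 (mul_ne_self (inv_ne_one.mpr hh)))

/-- choose a good non-midpoint -/
lemma choose_top (r : G → G → Prop) (hi : ∀ g : G, ¬ r g g)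
    (ht : ∀ a b c : G, r a b → r b c → r a c)
    (hto : ∀ a b : G, a ≠ b → r a b ∨ r b a)
    (hl : ∀ g h : G, h ≠ 1 → r g (h * g) ∨ r g (h⁻¹ * g))
    (R : Set G) (hR1 : (1:G) ∉ R)
    (hRinv : ∀ g : G, g ≠ 1 → (g⁻¹ ∈ R ↔ g ∉ R))
    (S : Finset G) (hS : S.Nonempty) :
    ∃ m ∈ S, (∀ h : G, h ≠ 1 → h * m ∈ S → h⁻¹ * m ∈ S → False) ∧
      (m ∉ R ∨ m⁻¹ ∉ S) := by
  obtain ⟨m, hmS, hmax⟩ := exists_max r ht hto S hS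
  set T := S.image (·⁻¹) with hTdef
  have memT : ∀ x : G, x ∈ T ↔ x⁻¹ ∈ S := by
    intro x
    constructor
    · intro hx
      obtain ⟨b, hb, rfl⟩ := Finset.mem_image.mp hx
      simpa using hb
    · intro hx
      exact Finset.mem_image.mpr ⟨x⁻¹, hx, by simp⟩
  obtain ⟨n', hn'T, hn'max⟩ := exists_max r ht hto T (hS.image _)
  set n := n'⁻¹ with hndef
  have hnS : n ∈ S := (memT n').mp hn'T
  have hnNM : ∀ h : G, h ≠ 1 → h * n ∈ S → h⁻¹ * n ∈ S → False := by
    intro h hh h1 h2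
    have hk : (n⁻¹ * h⁻¹ * n) ≠ 1 := by
      intro e
      apply inv_ne_one.mpr hh
      have := congrArg (fun x => n * x * n⁻¹) e
      simpa [mul_assoc] using this
    have e1 : (n⁻¹ * h⁻¹ * n) * n' ∈ T := by
      rw [memT]
      have : (n⁻¹ * h⁻¹ * n) * n' = (h * n)⁻¹ := by
        rw [hndef]; group
      rw [this, inv_inv]; exact h1
    have e2 : (n⁻¹ * h⁻¹ * n)⁻¹ * n' ∈ T := by
      rw [memT]
      have : (n⁻¹ * h⁻¹ * n)⁻¹ * n' = (h⁻¹ * n)⁻¹ := by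
        rw [hndef]; group
      rw [this, inv_inv]; exact h2
    exact max_nonmid r hi ht hl hn'max hk e1 e2
  by_cases hmgood : m ∉ R ∨ m⁻¹ ∉ S
  · exact ⟨m, hmS, fun h hh => max_nonmid r hi ht hl hmax hh, hmgood⟩
  by_cases hngood : n ∉ R ∨ n⁻¹ ∉ S
  · exact ⟨n, hnS, hnNM, hngood⟩
  push_neg at hmgood hngood
  exfalso
  obtain ⟨hmR, hmiS⟩ := hmgood
  obtain ⟨hnR, hniS⟩ := hngood
  have hm1 : m ≠ 1 := fun e => hR1 (e ▸ hmR)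
  -- m ∈ T
  have hmT : m ∈ T := (memT m).mpr (by simpa using hmiS)
  have hn'S : n' ∈ S := by simpa [hndef] using hniS
  have hmn : m = n' := by
    by_contra hne
    exact asym r hi ht (hn'max m hmT hne) (hmax n' hn'S (Ne.symm hne))
  have hmi : m⁻¹ ∈ R := by
    have h' := hnR
    rw [hndef, ← hmn] at h'
    exact h'
  exact ((hRinv m hm1).mp hmi) hmR

/-- finite realization lemma -/
lemma finlem (r : G → G → Prop) (hi : ∀ g : G, ¬ r g g)
    (ht : ∀ a b c : G, r a b → r b c → r a c)
    (hto : ∀ a b : G, a ≠ b → r a b ∨ r b a)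
    (hl : ∀ g h : G, h ≠ 1 → r g (h * g) ∨ r g (h⁻¹ * g))
    (R : Set G) (hR1 : (1:G) ∉ R)
    (hRinv : ∀ g : G, g ≠ 1 → (g⁻¹ ∈ R ↔ g ∉ R)) :
    ∀ S : Finset G, ∃ f : G → ℕ,
      Set.InjOn f ↑S ∧
      (∀ g h : G, h ≠ 1 → g ∈ S → h * g ∈ S → h⁻¹ * g ∈ S →
        f g < f (h * g) ∨ f g < f (h⁻¹ * g)) ∧
      (∀ g ∈ S, g ≠ 1 → g⁻¹ ∈ S → (f g < f g⁻¹ ↔ g ∈ R)) := by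
  intro S
  induction S using Finset.strongInduction with
  | _ S ih =>
  rcases S.eq_empty_or_nonempty with hS | hS
  · exact ⟨fun _ => 0, by simp [hS], by simp [hS], by simp [hS]⟩
  obtain ⟨m, hmS, hNM, hGood⟩ := choose_top r hi ht hto hl R hR1 hRinv S hS
  obtain ⟨f', hinj, hlio, hsgn⟩ := ih (S.erase m) (Finset.erase_ssubset hmS)
  set M := ((S.erase m).sup f') + 1 with hMdef
  have hlt : ∀ a ∈ S.erase m, f' a < M := by
    intro a ha
    exact Nat.lt_succ_of_le (Finset.le_sup ha)
  refine ⟨fun x => if x = m then M else f' x, ?_, ?_, ?_⟩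
  · intro a ha b hb hab
    simp only at hab
    by_cases ham : a = m <;> by_cases hbm : b = m
    · rw [ham, hbm]
    · rw [if_pos ham, if_neg hbm] at hab
      exact absurd hab.symm (Nat.ne_of_lt (hlt b (Finset.mem_erase.mpr ⟨hbm, hb⟩)))
    · rw [if_neg ham, if_pos hbm] at hab
      exact absurd hab (Nat.ne_of_lt (hlt a (Finset.mem_erase.mpr ⟨ham, ha⟩)))
    · rw [if_neg ham, if_neg hbm] at hab
      exact hinj (Finset.mem_erase.mpr ⟨ham, ha⟩) (Finset.mem_erase.mpr ⟨hbm, hb⟩) hab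
  · intro g h hh hgS hhgS hinvS
    by_cases hgm : g = m
    · exact absurd (hNM h hh (hgm ▸ hhgS) (hgm ▸ hinvS)) id
    have hgE : g ∈ S.erase m := Finset.mem_erase.mpr ⟨hgm, hgS⟩
    by_cases h1 : h * g = m
    · left
      simp only [if_neg hgm, if_pos h1]
      exact hlt g hgE
    by_cases h2 : h⁻¹ * g = m
    · right
      simp only [if_neg hgm, if_pos h2]
      exact hlt g hgE
    · have := hlio g h hh hgE (Finset.mem_erase.mpr ⟨h1, hhgS⟩)
        (Finset.mem_erase.mpr ⟨h2, hinvS⟩)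
      simpa only [if_neg hgm, if_neg h1, if_neg h2] using this
  · intro g hgS hg1 hgiS
    have hii : g⁻¹ ≠ g := sq_ne r hi ht hto hl hg1
    by_cases hgm : g = m
    · subst hgm
      have hgR : g ∉ R := hGood.resolve_right (fun hc => hc hgiS)
      have hlt2 : f' g⁻¹ < M := hlt _ (Finset.mem_erase.mpr ⟨hii, hgiS⟩)
      show (if g = g then M else f' g) < (if g⁻¹ = g then M else f' g⁻¹) ↔ g ∈ R
      rw [if_pos rfl, if_neg hii]
      exact ⟨fun hc => absurd hc (by omega), fun hc => absurd hc hgR⟩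
    by_cases hgi : g⁻¹ = m
    · have hm1 : m ≠ 1 := by
        rw [← hgi]; exact inv_ne_one.mpr hg1
      have hmR : m ∉ R := hGood.resolve_right (fun hc => hc (by rw [← hgi, inv_inv]; exact hgS))
      have hgR : g ∈ R := by
        have := (hRinv m hm1).mpr hmR
        rw [← hgi, inv_inv] at this
        exact this
      simp only [if_neg hgm, if_pos hgi]
      exact ⟨fun _ => hgR, fun _ => hlt g (Finset.mem_erase.mpr ⟨hgm, hgS⟩)⟩
    · have := hsgn g (Finset.mem_erase.mpr ⟨hgm, hgS⟩) hg1 (Finset.mem_erase.mpr ⟨hgi, hgiS⟩)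
      simpa only [if_neg hgm, if_neg hgi] using this




/-- compactness: realize a choice set by a locally invariant total order -/
lemma realize (r : G → G → Prop) (hi : ∀ g : G, ¬ r g g)
    (ht : ∀ a b c : G, r a b → r b c → r a c)
    (hto : ∀ a b : G, a ≠ b → r a b ∨ r b a)
    (hl : ∀ g h : G, h ≠ 1 → r g (h * g) ∨ r g (h⁻¹ * g))
    (R : Set G) (hR1 : (1:G) ∉ R)
    (hRinv : ∀ g : G, g ≠ 1 → (g⁻¹ ∈ R ↔ g ∉ R)) :
    ∃ r' : G → G → Prop,
      ((∀ g : G, ¬ r' g g) ∧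
       (∀ a b c : G, r' a b → r' b c → r' a c) ∧
       (∀ a b : G, a ≠ b → r' a b ∨ r' b a) ∧
       (∀ g h : G, h ≠ 1 → r' g (h * g) ∨ r' g (h⁻¹ * g))) ∧
      (∀ g : G, g ≠ 1 → (r' g g⁻¹ ↔ g ∈ R)) := by
  classical
  choose F hF1 hF2 hF3 using finlem r hi ht hto hl R hR1 hRinv
  let U : Ultrafilter (Finset G) := Ultrafilter.of atTop
  have hUat : (U : Filter (Finset G)) ≤ atTop := Ultrafilter.of_le atTop
  have hU : ∀ a : Finset G, {S : Finset G | a ≤ S} ∈ (U : Filter (Finset G)) :=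
    fun a => hUat (Filter.mem_atTop a)
  refine ⟨fun a b => {S : Finset G | a ∈ S ∧ b ∈ S ∧ F S a < F S b} ∈ (U : Filter (Finset G)),
    ⟨?_, ?_, ?_, ?_⟩, ?_⟩
  · -- irreflexive
    intro g hmem
    have : {S : Finset G | g ∈ S ∧ g ∈ S ∧ F S g < F S g} = ∅ := by
      ext S; simp [lt_irrefl]
    rw [this] at hmem
    exact Filter.empty_notMem _ hmem
  · -- transitive
    intro a b c h1 h2
    refine Filter.mem_of_superset (Filter.inter_mem h1 h2) ?_
    rintro S ⟨⟨haS, hbS, hab⟩, ⟨_, hcS, hbc⟩⟩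
    exact ⟨haS, hcS, lt_trans hab hbc⟩
  · -- total
    intro a b hab
    have hE : {S : Finset G | a ∈ S ∧ b ∈ S} ∈ (U : Filter (Finset G)) := by
      refine Filter.mem_of_superset (hU {a, b}) ?_
      intro S hS
      simp only [Set.mem_setOf_eq, Finset.le_iff_subset, Finset.insert_subset_iff,
        Finset.singleton_subset_iff] at hS ⊢
      exact hS
    have hsub : {S : Finset G | a ∈ S ∧ b ∈ S} ⊆
        {S : Finset G | a ∈ S ∧ b ∈ S ∧ F S a < F S b} ∪
        {S : Finset G | b ∈ S ∧ a ∈ S ∧ F S b < F S a} := by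
      rintro S ⟨ha, hb⟩
      have hne : F S a ≠ F S b := fun e =>
        hab (hF1 S (Finset.mem_coe.mpr ha) (Finset.mem_coe.mpr hb) e)
      rcases lt_or_gt_of_ne hne with hc | hc
      · exact Or.inl ⟨ha, hb, hc⟩
      · exact Or.inr ⟨hb, ha, hc⟩
    have := Filter.mem_of_superset hE hsub
    exact Ultrafilter.union_mem_iff.mp (Ultrafilter.mem_coe.mp this)
  · -- locally invariant
    intro g h hh
    have hE : {S : Finset G | g ∈ S ∧ h * g ∈ S ∧ h⁻¹ * g ∈ S} ∈ (U : Filter (Finset G)) := by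
      refine Filter.mem_of_superset (hU {g, h * g, h⁻¹ * g}) ?_
      intro S hS
      simp only [Set.mem_setOf_eq, Finset.le_iff_subset, Finset.insert_subset_iff,
        Finset.singleton_subset_iff] at hS ⊢
      exact hS
    have hsub : {S : Finset G | g ∈ S ∧ h * g ∈ S ∧ h⁻¹ * g ∈ S} ⊆
        {S : Finset G | g ∈ S ∧ h * g ∈ S ∧ F S g < F S (h * g)} ∪
        {S : Finset G | g ∈ S ∧ h⁻¹ * g ∈ S ∧ F S g < F S (h⁻¹ * g)} := by
      rintro S ⟨h1, h2, h3⟩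
      rcases hF2 S g h hh h1 h2 h3 with hc | hc
      · exact Or.inl ⟨h1, h2, hc⟩
      · exact Or.inr ⟨h1, h3, hc⟩
    have := Filter.mem_of_superset hE hsub
    exact Ultrafilter.union_mem_iff.mp (Ultrafilter.mem_coe.mp this)
  · -- signs
    intro g hg1
    have hE : {S : Finset G | g ∈ S ∧ g⁻¹ ∈ S} ∈ (U : Filter (Finset G)) := by
      refine Filter.mem_of_superset (hU {g, g⁻¹}) ?_
      intro S hS
      simp only [Set.mem_setOf_eq, Finset.le_iff_subset, Finset.insert_subset_iff,
        Finset.singleton_subset_iff] at hS ⊢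
      exact hS
    constructor
    · intro hmem
      have := Filter.inter_mem hmem hE
      obtain ⟨S, ⟨hg, hgi, hlt⟩, _⟩ := Filter.nonempty_of_mem this
      exact (hF3 S g hg hg1 hgi).mp hlt
    · intro hgR
      refine Filter.mem_of_superset hE ?_
      rintro S ⟨h1, h2⟩
      exact ⟨h1, h2, (hF3 S g h1 hg1 h2).mpr hgR⟩




/-- base choice set extracted from the given order -/
def R0 (r : G → G → Prop) : Set G := {g | g ≠ 1 ∧ r g g⁻¹}

/-- flip sets: powers of `g₀` indexed by `A` -/
def Pset (g₀ : G) (A : Set ℕ) : Set G :=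
  {g | ∃ k ∈ A, g = g₀ ^ (k + 1) ∨ g⁻¹ = g₀ ^ (k + 1)}

/-- the twisted choice set -/
def Rset (r : G → G → Prop) (g₀ : G) (A : Set ℕ) : Set G :=
  {g | (g ∈ R0 r ∧ g ∉ Pset g₀ A) ∨ (g ∉ R0 r ∧ g ∈ Pset g₀ A)}


end Stmt15Aux

open Stmt15Aux

set_option maxHeartbeats 1000000 in
/-- If a nontrivial group admits a locally invariant total ordering,
it admits uncountably many. -/
theorem stmt15 {G : Type*} [Group G] [Nontrivial G]
    (h : ∃ r : G → G → Prop,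
      (∀ g : G, ¬ r g g) ∧
      (∀ a b c : G, r a b → r b c → r a c) ∧
      (∀ a b : G, a ≠ b → r a b ∨ r b a) ∧
      (∀ g h : G, h ≠ 1 → r g (h * g) ∨ r g (h⁻¹ * g))) :
    ¬ Set.Countable { r : G → G → Prop |
      (∀ g : G, ¬ r g g) ∧
      (∀ a b c : G, r a b → r b c → r a c) ∧
      (∀ a b : G, a ≠ b → r a b ∨ r b a) ∧
      (∀ g h : G, h ≠ 1 → r g (h * g) ∨ r g (h⁻¹ * g)) } := by
  classical
  obtain ⟨r0, hi, ht, hto, hl⟩ := h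
  intro hcount
  obtain ⟨g₀, hg₀⟩ := exists_ne (1 : G)
  have hpow : ∀ n : ℕ, n ≠ 0 → g₀ ^ n ≠ 1 := fun n hn => pow_ne r0 hi ht hto hl hg₀ hn
  -- power injectivity
  have powinj : ∀ a b : ℕ, g₀ ^ a = g₀ ^ b → a = b := by
    intro a b hab
    rcases Nat.lt_trichotomy a b with hc | hc | hc
    · exfalso
      apply hpow (b - a) (by omega)
      have h2 : g₀ ^ b = g₀ ^ a * g₀ ^ (b - a) := by
        rw [← pow_add]; congr 1; omega
      rw [hab] at h2
      exact (left_eq_mul.mp h2)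
    · exact hc
    · exfalso
      apply hpow (a - b) (by omega)
      have h2 : g₀ ^ a = g₀ ^ b * g₀ ^ (a - b) := by
        rw [← pow_add]; congr 1; omega
      rw [← hab] at h2
      exact (left_eq_mul.mp h2)
  have hmixed : ∀ a b : ℕ, a ≠ 0 → (g₀ ^ a)⁻¹ ≠ g₀ ^ b := by
    intro a b ha hc
    apply hpow (a + b) (by omega)
    rw [pow_add, ← hc, mul_inv_cancel]
  -- base choice set
  have hR01 : (1:G) ∉ R0 r0 := fun hc => hc.1 rfl
  have hR0inv : ∀ g : G, g ≠ 1 → (g⁻¹ ∈ R0 r0 ↔ g ∉ R0 r0) := by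
    intro g hg
    have hii : g⁻¹ ≠ g := sq_ne r0 hi ht hto hl hg
    simp only [R0, Set.mem_setOf_eq, inv_inv, inv_ne_one]
    constructor
    · rintro ⟨-, hr⟩ hc
      exact asym r0 hi ht hr hc.2
    · intro hc
      refine ⟨hg, ?_⟩
      rcases hto g⁻¹ g hii with h1 | h1
      · exact h1
      · exact absurd ⟨hg, h1⟩ hc
  -- membership in flip sets
  have memP : ∀ (A : Set ℕ) (k : ℕ), (g₀ ^ (k + 1) ∈ Pset g₀ A ↔ k ∈ A) := by
    intro A k
    constructor
    · rintro ⟨j, hj, hc | hc⟩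
      · have : k + 1 = j + 1 := powinj _ _ hc
        have : k = j := by omega
        exact this ▸ hj
      · exact absurd hc (hmixed (k+1) (j+1) (by omega))
    · intro hk
      exact ⟨k, hk, Or.inl rfl⟩
  have Psym : ∀ (A : Set ℕ) (g : G), g ∈ Pset g₀ A ↔ g⁻¹ ∈ Pset g₀ A := by
    intro A g
    simp only [Pset, Set.mem_setOf_eq, inv_inv]
    constructor
    · rintro ⟨j, hj, hc | hc⟩
      · exact ⟨j, hj, Or.inr hc⟩
      · exact ⟨j, hj, Or.inl hc⟩
    · rintro ⟨j, hj, hc | hc⟩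
      · exact ⟨j, hj, Or.inr hc⟩
      · exact ⟨j, hj, Or.inl hc⟩
  -- twisted choice sets are valid
  have hRA1 : ∀ A : Set ℕ, (1:G) ∉ Rset r0 g₀ A := by
    intro A hc
    have h1P : (1:G) ∉ Pset g₀ A := by
      rintro ⟨j, hj, hc' | hc'⟩
      · exact hpow (j+1) (by omega) hc'.symm
      · rw [inv_one] at hc'
        exact hpow (j+1) (by omega) hc'.symm
    rcases hc with ⟨h1, _⟩ | ⟨_, h2⟩
    · exact hR01 h1
    · exact h1P h2
  have hRAinv : ∀ (A : Set ℕ) (g : G), g ≠ 1 → (g⁻¹ ∈ Rset r0 g₀ A ↔ g ∉ Rset r0 g₀ A) := by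
    intro A g hg
    have h0 := hR0inv g hg
    have hs := Psym A g
    simp only [Rset, Set.mem_setOf_eq]
    rw [← hs, h0]
    tauto
  -- realize each twisted choice set
  have key : ∀ A : Set ℕ, ∃ r' : G → G → Prop,
      ((∀ g : G, ¬ r' g g) ∧
       (∀ a b c : G, r' a b → r' b c → r' a c) ∧
       (∀ a b : G, a ≠ b → r' a b ∨ r' b a) ∧
       (∀ g h : G, h ≠ 1 → r' g (h * g) ∨ r' g (h⁻¹ * g))) ∧
      (∀ g : G, g ≠ 1 → (r' g g⁻¹ ↔ g ∈ Rset r0 g₀ A)) := by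
    intro A
    exact realize r0 hi ht hto hl (Rset r0 g₀ A) (hRA1 A) (hRAinv A)
  choose Φ hΦmem hΦsgn using key
  obtain ⟨e, he⟩ := Set.countable_iff_exists_injective.mp hcount
  apply Function.cantor_injective (fun A : Set ℕ => e ⟨Φ A, hΦmem A⟩)
  intro A B hAB
  have hΦeq : Φ A = Φ B := congrArg Subtype.val (he hAB)
  ext k
  have hgne : g₀ ^ (k + 1) ≠ 1 := hpow (k+1) (by omega)
  have hA := hΦsgn A (g₀ ^ (k+1)) hgne
  have hB := hΦsgn B (g₀ ^ (k+1)) hgne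
  rw [hΦeq] at hA
  have hRR : g₀ ^ (k+1) ∈ Rset r0 g₀ A ↔ g₀ ^ (k+1) ∈ Rset r0 g₀ B := by
    rw [← hA, ← hB]
  have hPA := memP A k
  have hPB := memP B k
  simp only [Rset, Set.mem_setOf_eq] at hRR
  rw [hPA, hPB] at hRR
  by_cases hg : g₀ ^ (k+1) ∈ R0 r0 <;> tauto
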